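/- Let G be a centerless group with the weakly Howson property. Then G × ℤ has the finitely generated fixed subgroup property of automorphisms if and only if G has the finitely generated fixed subgroup property of automorphisms and every group homomorphism α : G → ℤ has finitely generated kernel. -/

import Mathlib

/-- The fixed subgroup of an endomorphism of a group. -/
def fixedSubgroup {G : Type*} [Group G] (φ : G →* G) : Subgroup G where
  carrier := {g | φ g = g}
  one_mem' := map_one φ
  mul_mem' := by
    intro a b ha hb
    simp only [Set.mem_setOf_eq, map_mul] at *
    rw [ha, hb]
  inv_mem' := by
    intro a ha
    simp only [Set.mem_setOf_eq, map_inv] at *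
    rw [ha]

/-- A group has the weakly Howson property if the intersection of any two finitely
generated subgroups, one of which is normal, is finitely generated. -/
def WeaklyHowson (G : Type*) [Group G] : Prop :=
  ∀ H K : Subgroup G, H.Normal → H.FG → K.FG → (H ⊓ K).FG

open Multiplicative

lemma mem_fixedSubgroup_iff {G : Type*} [Group G] {φ : G →* G} {g : G} :
    g ∈ fixedSubgroup φ ↔ φ g = g := Iff.rfl

section Helpers
variable {G : Type*} {N : Type*} [Group G] [Group N]

lemma myFGmap {P : Subgroup G} (h : P.FG) (e : G →* N) : (P.map e).FG := by
  obtain ⟨S, rfl⟩ := h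
  rw [Subgroup.fg_iff]
  exact ⟨e '' S, by rw [MonoidHom.map_closure], (S.finite_toSet).image e⟩

lemma myFGsup {H K : Subgroup G} (hH : H.FG) (hK : K.FG) : (H ⊔ K).FG := by
  obtain ⟨S, rfl⟩ := hH
  obtain ⟨T, rfl⟩ := hK
  rw [Subgroup.fg_iff]
  exact ⟨↑S ∪ ↑T, by rw [Subgroup.closure_union], (S.finite_toSet).union T.finite_toSet⟩

lemma myProdEqSup (H : Subgroup G) (K : Subgroup N) :
    H.prod K = (H.map (MonoidHom.inl G N)) ⊔ (K.map (MonoidHom.inr G N)) := by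
  apply le_antisymm
  · rintro ⟨g, n⟩ ⟨hg, hn⟩
    have h : (g, n) = ((g, 1) : G × N) * (1, n) := by simp
    rw [h]
    exact mul_mem (Subgroup.mem_sup_left ⟨g, hg, rfl⟩) (Subgroup.mem_sup_right ⟨n, hn, rfl⟩)
  · apply sup_le
    · rintro ⟨g, n⟩ ⟨x, hx, h⟩; rw [← h]; exact ⟨hx, one_mem K⟩
    · rintro ⟨g, n⟩ ⟨x, hx, h⟩; rw [← h]; exact ⟨one_mem H, hx⟩

lemma myProdFG {H : Subgroup G} {K : Subgroup N} (hH : H.FG) (hK : K.FG) : (H.prod K).FG := by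
  rw [myProdEqSup]; exact myFGsup (myFGmap hH _) (myFGmap hK _)

lemma myMapFstProd (H : Subgroup G) (K : Subgroup N) :
    (H.prod K).map (MonoidHom.fst G N) = H := by
  ext g
  constructor
  · rintro ⟨⟨a, b⟩, ⟨ha, hb⟩, rfl⟩; exact ha
  · intro hg; exact ⟨(g, 1), ⟨hg, one_mem K⟩, rfl⟩

lemma myTopFG : (⊤ : Subgroup (Multiplicative ℤ)).FG := by
  refine ⟨{Multiplicative.ofAdd 1}, ?_⟩
  rw [eq_top_iff]
  intro x _
  have h : x = (Multiplicative.ofAdd (1:ℤ)) ^ (Multiplicative.toAdd x) := by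
    apply Multiplicative.toAdd.injective
    simp [toAdd_zpow]
  rw [h]
  exact zpow_mem (Subgroup.subset_closure (by simp)) _

end Helpers

section Fwd
variable {G : Type*} [Group G]

/-- the shear automorphism of `G × M` attached to `α : G →* M` for commutative `M`. -/
def shear {M : Type*} [CommGroup M] (α : G →* M) : (G × M) ≃* (G × M) where
  toFun p := (p.1, α p.1 * p.2)
  invFun p := (p.1, (α p.1)⁻¹ * p.2)
  left_inv p := by simp
  right_inv p := by simp
  map_mul' p q := by
    simp only [Prod.fst_mul, Prod.snd_mul, map_mul, Prod.mk_mul_mk, Prod.mk.injEq]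
    exact ⟨trivial, mul_mul_mul_comm _ _ _ _⟩

lemma fixedSubgroup_shear {M : Type*} [CommGroup M] (α : G →* M) :
    fixedSubgroup (shear α).toMonoidHom = α.ker.prod ⊤ := by
  ext ⟨g, z⟩
  rw [mem_fixedSubgroup_iff]
  show ((g, α g * z) : G × M) = (g, z) ↔ _
  rw [Prod.mk.injEq]
  simp [Subgroup.mem_prod, mul_eq_right, MonoidHom.mem_ker]

lemma fixedSubgroup_prodCongr (ψ : G ≃* G) :
    fixedSubgroup (ψ.prodCongr (MulEquiv.refl (Multiplicative ℤ))).toMonoidHom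
      = (fixedSubgroup ψ.toMonoidHom).prod ⊤ := by
  ext ⟨g, z⟩
  rw [mem_fixedSubgroup_iff]
  show ((ψ g, z) : G × Multiplicative ℤ) = (g, z) ↔ _
  rw [Prod.mk.injEq]
  simp [Subgroup.mem_prod, mem_fixedSubgroup_iff]

end Fwd

section Back
variable {G : Type*} [Group G]

lemma center_fst (hc : Subgroup.center G = ⊥)
    (φ : (G × Multiplicative ℤ) ≃* (G × Multiplicative ℤ)) (z : Multiplicative ℤ) :
    (φ (1, z)).1 = 1 := by
  have hcen : ∀ y : G × Multiplicative ℤ, φ (1, z) * φ y = φ y * φ (1, z) := by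
    intro y
    rw [← map_mul, ← map_mul]
    congr 1
    ext
    · simp
    · simp [mul_comm]
  have h1 : (φ (1, z)).1 ∈ Subgroup.center G := by
    rw [Subgroup.mem_center_iff]
    intro g
    obtain ⟨y, hy⟩ := φ.surjective (g, 1)
    have h := congrArg Prod.fst (hcen y)
    rw [hy] at h
    simpa using h.symm
  rw [hc, Subgroup.mem_bot] at h1
  exact h1

/-- the `G`-component homomorphism of an automorphism of `G × ℤ`. -/
def fOf (φ : (G × Multiplicative ℤ) ≃* (G × Multiplicative ℤ)) : G →* G :=
  (MonoidHom.fst G (Multiplicative ℤ)).comp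
    (φ.toMonoidHom.comp (MonoidHom.inl G (Multiplicative ℤ)))

/-- the `ℤ`-component homomorphism of an automorphism of `G × ℤ`. -/
def aOf (φ : (G × Multiplicative ℤ) ≃* (G × Multiplicative ℤ)) : G →* Multiplicative ℤ :=
  (MonoidHom.snd G (Multiplicative ℤ)).comp
    (φ.toMonoidHom.comp (MonoidHom.inl G (Multiplicative ℤ)))

/-- the "sign" of an automorphism of `G × ℤ`. -/
def eOf (φ : (G × Multiplicative ℤ) ≃* (G × Multiplicative ℤ)) : ℤ :=
  (φ (1, ofAdd 1)).2.toAdd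

lemma phi_snd (φ : (G × Multiplicative ℤ) ≃* (G × Multiplicative ℤ)) (z : Multiplicative ℤ) :
    (φ (1, z)).2 = ofAdd (z.toAdd * eOf φ) := by
  have hz : ((1 : G), z) = ((1 : G), ofAdd (1 : ℤ)) ^ z.toAdd := by
    ext
    · simp
    · apply Multiplicative.toAdd.injective
      simp [toAdd_zpow]
  rw [hz, map_zpow]
  apply Multiplicative.toAdd.injective
  simp [toAdd_zpow, eOf, mul_comm]

lemma phi_apply (hc : Subgroup.center G = ⊥)
    (φ : (G × Multiplicative ℤ) ≃* (G × Multiplicative ℤ)) (g : G) (z : Multiplicative ℤ) :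
    φ (g, z) = (fOf φ g, aOf φ g * ofAdd (z.toAdd * eOf φ)) := by
  have h : ((g, z) : G × Multiplicative ℤ) = (g, 1) * (1, z) := by simp
  rw [h, map_mul]
  ext
  · show (φ (g,1)).1 * (φ (1,z)).1 = fOf φ g
    rw [center_fst hc φ z, mul_one]
    rfl
  · show (φ (g,1)).2 * (φ (1,z)).2 = aOf φ g * ofAdd (z.toAdd * eOf φ)
    rw [phi_snd φ z]
    rfl

lemma eOf_mul (hc : Subgroup.center G = ⊥)
    (φ : (G × Multiplicative ℤ) ≃* (G × Multiplicative ℤ)) :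
    eOf φ.symm * eOf φ = 1 := by
  have h1 : φ (1, ofAdd (1:ℤ)) = (1, ofAdd (eOf φ)) := by
    rw [phi_apply hc φ 1 (ofAdd 1)]
    simp
  have h2 := φ.symm_apply_apply (1, ofAdd (1:ℤ))
  rw [h1, phi_apply hc φ.symm 1 (ofAdd (eOf φ))] at h2
  have h := congrArg Prod.snd h2
  simp only [map_one, one_mul] at h
  have h3 := congrArg Multiplicative.toAdd h
  simpa using h3

lemma fOf_symm_comp (hc : Subgroup.center G = ⊥)
    (φ : (G × Multiplicative ℤ) ≃* (G × Multiplicative ℤ)) (g : G) :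
    fOf φ.symm (fOf φ g) = g := by
  have h1 : φ (g, 1) = (fOf φ g, aOf φ g) := by
    rw [phi_apply hc φ g 1]; simp
  have h2 := φ.symm_apply_apply (g, (1 : Multiplicative ℤ))
  rw [h1, phi_apply hc φ.symm (fOf φ g) (aOf φ g)] at h2
  exact congrArg Prod.fst h2

lemma mem_fix_iff (hc : Subgroup.center G = ⊥)
    (φ : (G × Multiplicative ℤ) ≃* (G × Multiplicative ℤ)) (g : G) (z : Multiplicative ℤ) :
    (g, z) ∈ fixedSubgroup φ.toMonoidHom ↔
      (fOf φ g = g ∧ (aOf φ g).toAdd + z.toAdd * eOf φ = z.toAdd) := by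
  rw [mem_fixedSubgroup_iff]
  show φ (g, z) = (g, z) ↔ _
  rw [phi_apply hc φ g z, Prod.mk.injEq]
  have key : ∀ a b : Multiplicative ℤ, a = b ↔ a.toAdd = b.toAdd :=
    fun a b => ⟨congrArg _, fun h => Multiplicative.toAdd.injective h⟩
  rw [key (aOf φ g * ofAdd (z.toAdd * eOf φ)) z]
  simp only [toAdd_mul, toAdd_ofAdd, and_congr_right_iff]

/-- the automorphism of `G` induced by an automorphism of `G × ℤ` (when `G` is centerless). -/
def psiOf (hc : Subgroup.center G = ⊥)
    (φ : (G × Multiplicative ℤ) ≃* (G × Multiplicative ℤ)) : G ≃* G where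
  toFun := fOf φ
  invFun := fOf φ.symm
  left_inv := fOf_symm_comp hc φ
  right_inv g := by
    have := fOf_symm_comp hc φ.symm g
    rwa [MulEquiv.symm_symm] at this
  map_mul' := (fOf φ).map_mul

lemma fixedSubgroup_psiOf (hc : Subgroup.center G = ⊥)
    (φ : (G × Multiplicative ℤ) ≃* (G × Multiplicative ℤ)) :
    fixedSubgroup (psiOf hc φ).toMonoidHom = fixedSubgroup (fOf φ) := rfl

lemma back_main (hc : Subgroup.center G = ⊥) (hw : WeaklyHowson G)
    (h1 : ∀ ψ : G ≃* G, (fixedSubgroup ψ.toMonoidHom).FG)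
    (h2 : ∀ α : G →* Multiplicative ℤ, α.ker.FG)
    (φ : (G × Multiplicative ℤ) ≃* (G × Multiplicative ℤ)) :
    (fixedSubgroup φ.toMonoidHom).FG := by
  set f := fOf φ with hfdef
  set α := aOf φ with hadef
  have hF : (fixedSubgroup f).FG := by
    have := h1 (psiOf hc φ)
    rwa [fixedSubgroup_psiOf hc φ] at this
  have hε : eOf φ = 1 ∨ eOf φ = -1 := by
    have := eOf_mul hc φ
    rw [Int.mul_comm] at this
    exact Int.isUnit_iff.mp (IsUnit.of_mul_eq_one _ this)
  rcases hε with hε | hε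
  · -- ε = 1 : fixed subgroup is (Fix f ⊓ ker α) × ℤ
    have heq : fixedSubgroup φ.toMonoidHom = (fixedSubgroup f ⊓ α.ker).prod ⊤ := by
      ext ⟨g, z⟩
      rw [mem_fix_iff hc φ g z, Subgroup.mem_prod, Subgroup.mem_inf, hε]
      simp only [mul_one, Subgroup.mem_top, and_true, MonoidHom.mem_ker, mem_fixedSubgroup_iff]
      constructor
      · rintro ⟨hg, hz⟩
        refine ⟨hg, ?_⟩
        apply Multiplicative.toAdd.injective
        simpa using hz
      · rintro ⟨hg, hz⟩
        refine ⟨hg, ?_⟩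
        rw [hz]
        simp
    rw [heq]
    refine myProdFG ?_ myTopFG
    rw [inf_comm]
    exact hw α.ker (fixedSubgroup f) (MonoidHom.normal_ker α) (h2 α) hF
  · -- ε = -1
    set q : G →* Multiplicative (ZMod 2) :=
      (AddMonoidHom.toMultiplicative (Int.castAddHom (ZMod 2))).comp α with hqdef
    have hq : ∀ g : G, q g = 1 ↔ (2:ℤ) ∣ (α g).toAdd := by
      intro g
      rw [hqdef]
      simp only [MonoidHom.comp_apply, AddMonoidHom.coe_toMultiplicative, Function.comp_apply,
        Int.coe_castAddHom, ofAdd_eq_one]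
      exact_mod_cast ZMod.intCast_zmod_eq_zero_iff_dvd ((α g).toAdd) 2
    set H : Subgroup G := fixedSubgroup f ⊓ q.ker with hHdef
    have hHfg : H.FG := by
      haveI : Group.FG (fixedSubgroup f) := (Group.fg_iff_subgroup_fg _).mpr hF
      set r : ((fixedSubgroup f) : Subgroup G) →* Multiplicative (ZMod 2) :=
        q.comp (fixedSubgroup f).subtype with hrdef
      haveI : r.ker.FiniteIndex := Subgroup.finiteIndex_ker r
      have hKfg : r.ker.FG := (Group.fg_iff_subgroup_fg _).mp inferInstance
      have hmap : r.ker.map (fixedSubgroup f).subtype = H := by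
        ext g
        constructor
        · rintro ⟨x, hx, rfl⟩
          exact Subgroup.mem_inf.mpr ⟨x.2, hx⟩
        · rintro hg
          obtain ⟨hg1, hg2⟩ := Subgroup.mem_inf.mp hg
          exact ⟨⟨g, hg1⟩, hg2, rfl⟩
      rw [← hmap]
      exact myFGmap hKfg _
    have hdvd : ∀ x : G, x ∈ H → (2:ℤ) ∣ (α x).toAdd := fun x hx =>
      (hq x).mp (Subgroup.mem_inf.mp hx).2
    set j : H →* G × Multiplicative ℤ :=
      { toFun := fun x => ((x : G), ofAdd ((α (x : G)).toAdd / 2)),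
        map_one' := by
          ext <;> simp,
        map_mul' := by
          intro a b
          obtain ⟨u, hu⟩ := hdvd a a.2
          obtain ⟨v, hv⟩ := hdvd b b.2
          ext
          · rfl
          · show ofAdd ((α ((a : G) * (b : G))).toAdd / 2) =
              ofAdd ((α (a : G)).toAdd / 2) * ofAdd ((α (b : G)).toAdd / 2)
            apply Multiplicative.toAdd.injective
            simp only [map_mul, toAdd_mul, toAdd_ofAdd]
            rw [hu, hv]
            omega } with hjdef
    have hrange : j.range = fixedSubgroup φ.toMonoidHom := by
      ext ⟨g, z⟩
      rw [MonoidHom.mem_range, mem_fix_iff hc φ g z, hε]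
      constructor
      · rintro ⟨x, hx⟩
        obtain ⟨u, hu⟩ := hdvd x x.2
        have hx1 := congrArg Prod.fst hx
        have hx2 := congrArg Prod.snd hx
        simp only [hjdef, MonoidHom.coe_mk, OneHom.coe_mk] at hx1 hx2
        have hz : z.toAdd = (α (x : G)).toAdd / 2 := by
          rw [← hx2]
          simp
        constructor
        · rw [← hx1]
          exact (mem_fixedSubgroup_iff.mp (Subgroup.mem_inf.mp x.2).1)
        · rw [← hx1, hz, hu]
          omega
      · rintro ⟨hg, hz⟩
        have h2d : (2:ℤ) ∣ (α g).toAdd := ⟨z.toAdd, by linarith⟩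
        refine ⟨⟨g, Subgroup.mem_inf.mpr ⟨hg, (hq g).mpr h2d⟩⟩, ?_⟩
        have hz' : (α g).toAdd = 2 * z.toAdd := by linarith
        have hz2 : (α g).toAdd / 2 = z.toAdd := by omega
        simp only [hjdef, MonoidHom.coe_mk, OneHom.coe_mk, hz2]
        ext
        · rfl
        · simp
    haveI : Group.FG H := (Group.fg_iff_subgroup_fg _).mpr hHfg
    have hfg : j.range.FG := (Group.fg_iff_subgroup_fg _).mp inferInstance
    rwa [hrange] at hfg

end Back

/-- For a centerless group `G` with the weakly Howson property, `G × ℤ` has FGFP_a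
iff `G` has FGFP_a and every homomorphism `α : G → ℤ` has finitely generated kernel. -/
theorem fgfp_prod_int_iff {G : Type*} [Group G]
    (hc : Subgroup.center G = ⊥) (hw : WeaklyHowson G) :
    (∀ φ : (G × Multiplicative ℤ) ≃* (G × Multiplicative ℤ),
        (fixedSubgroup φ.toMonoidHom).FG) ↔
      ((∀ ψ : G ≃* G, (fixedSubgroup ψ.toMonoidHom).FG) ∧
        ∀ α : G →* Multiplicative ℤ, α.ker.FG) := by
  constructor
  · intro h
    constructor
    · intro ψ
      have hh := h (ψ.prodCongr (MulEquiv.refl (Multiplicative ℤ)))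
      rw [fixedSubgroup_prodCongr] at hh
      have h2 := myFGmap hh (MonoidHom.fst G (Multiplicative ℤ))
      rwa [myMapFstProd] at h2
    · intro α
      have hh := h (shear α)
      rw [fixedSubgroup_shear] at hh
      have h2 := myFGmap hh (MonoidHom.fst G (Multiplicative ℤ))
      rwa [myMapFstProd] at h2
  · rintro ⟨h1, h2⟩ φ
    exact back_main hc hw h1 h2 φ
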